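/- For every graph G, fun(G) ≤ 2·cwd(G) − 1, where fun(G) is the functionality and cwd(G) is the clique-width of G. -/

import Mathlib

open scoped Classical

/-- `k`-expressions over a vertex type `V`: create a vertex with a label,
disjoint union, rename a label, or join two label classes completely. -/
inductive CWExpr (V : Type*) (k : ℕ) : Type _ where
  | single : V → Fin k → CWExpr V k
  | union : CWExpr V k → CWExpr V k → CWExpr V k
  | relabel : Fin k → Fin k → CWExpr V k → CWExpr V k
  | join : Fin k → Fin k → CWExpr V k → CWExpr V k

namespace CWExpr

variable {V : Type*} [DecidableEq V] {k : ℕ}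

/-- The set of vertices created by an expression. -/
def verts : CWExpr V k → Finset V
  | single v _ => {v}
  | union a b => verts a ∪ verts b
  | relabel _ _ a => verts a
  | join _ _ a => verts a

/-- The label of a vertex in the graph built by an expression. -/
def label : CWExpr V k → V → Fin k
  | single _ i, _ => i
  | union a b, v => if v ∈ verts a then label a v else label b v
  | relabel i j a, v => if label a v = i then j else label a v
  | join _ _ a, v => label a v

/-- The adjacency relation of the graph built by an expression. -/
def adj : CWExpr V k → V → V → Prop
  | single _ _, _, _ => False
  | union a b, u, v => adj a u v ∨ adj b u v
  | relabel _ _ a, u, v => adj a u v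
  | join i j a, u, v => adj a u v ∨
      (u ∈ verts a ∧ v ∈ verts a ∧ u ≠ v ∧
        ((label a u = i ∧ label a v = j) ∨ (label a u = j ∧ label a v = i)))

/-- Well-formedness: in a disjoint union the two parts use disjoint vertex sets,
and a vertex is created only once. -/
def OK : CWExpr V k → Prop
  | single _ _ => True
  | union a b => OK a ∧ OK b ∧ Disjoint (verts a) (verts b)
  | relabel _ _ a => OK a
  | join _ _ a => OK a

end CWExpr

namespace CWExpr

variable {V : Type*} [DecidableEq V] {k : ℕ}

set_option linter.unusedSectionVars false

lemma elim0 : CWExpr V 0 → False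
  | single _ i => i.elim0
  | union a _ => elim0 a
  | relabel i _ _ => i.elim0
  | join i _ _ => i.elim0

lemma adj_mem : ∀ (e : CWExpr V k) {u v : V}, e.adj u v → u ∈ e.verts ∧ v ∈ e.verts ∧ u ≠ v
  | single _ _, u, v, h => h.elim
  | union a b, u, v, h => by
      rcases h with h | h
      · obtain ⟨h1, h2, h3⟩ := adj_mem a h
        exact ⟨Finset.mem_union_left _ h1, Finset.mem_union_left _ h2, h3⟩
      · obtain ⟨h1, h2, h3⟩ := adj_mem b h
        exact ⟨Finset.mem_union_right _ h1, Finset.mem_union_right _ h2, h3⟩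
  | relabel i j a, u, v, h => adj_mem a h
  | join i j a, u, v, h => by
      rcases h with h | ⟨h1, h2, h3, _⟩
      · exact adj_mem a h
      · exact ⟨h1, h2, h3⟩

end CWExpr

namespace CWExpr

variable {V : Type*} [DecidableEq V] {k : ℕ}

/-- If two vertices of `W` share a label, then there are two vertices of `W` whose
neighbourhoods (within `W`, outside a small exceptional set `D`) coincide. -/
lemma key (W : Finset V) : ∀ e : CWExpr V k, e.OK →
    (∃ u ∈ e.verts ∩ W, ∃ v ∈ e.verts ∩ W, u ≠ v ∧ e.label u = e.label v) →
    ∃ u ∈ e.verts ∩ W, ∃ v ∈ e.verts ∩ W, u ≠ v ∧ e.label u = e.label v ∧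
      ∃ D : Finset V, D.card ≤ 2 * k - 2 ∧
        ∀ z ∈ W, z ≠ u → z ≠ v → z ∉ D → (e.adj u z ↔ e.adj v z) := by
  intro e
  induction e with
  | single w i =>
    rintro _ ⟨u, hu, v, hv, huv, -⟩
    simp only [verts, Finset.mem_inter, Finset.mem_singleton] at hu hv
    exact absurd (hu.1.trans hv.1.symm) huv
  | union a b iha ihb =>
    rintro ⟨oka, okb, hdis⟩ ⟨u, hu, v, hv, huv, hlab⟩
    have hva : ∀ {x : V}, x ∈ a.verts → x ∉ b.verts := fun hx hx' =>
      Finset.disjoint_left.mp hdis hx hx'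
    have hvb : ∀ {x : V}, x ∈ b.verts → x ∉ a.verts := fun hx hx' =>
      Finset.disjoint_left.mp hdis hx' hx
    have hlu : ∀ {x : V}, x ∈ a.verts → (union a b).label x = a.label x := by
      intro x hx; simp [label, hx]
    have hlb : ∀ {x : V}, x ∈ b.verts → (union a b).label x = b.label x := by
      intro x hx; simp [label, hvb hx]
    have hadja : ∀ {x z : V}, x ∈ a.verts → ((union a b).adj x z ↔ a.adj x z) := by
      intro x z hx
      constructor
      · rintro (h | h)
        · exact h
        · exact absurd (adj_mem b h).1 (hva hx)
      · exact Or.inl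
    have hadjb : ∀ {x z : V}, x ∈ b.verts → ((union a b).adj x z ↔ b.adj x z) := by
      intro x z hx
      constructor
      · rintro (h | h)
        · exact absurd (adj_mem a h).1 (hvb hx)
        · exact h
      · exact Or.inr
    -- lifting from the subexpressions
    have lifta : (∃ u ∈ a.verts ∩ W, ∃ v ∈ a.verts ∩ W, u ≠ v ∧ a.label u = a.label v) →
        _ := iha oka
    by_cases hPa : ∃ u ∈ a.verts ∩ W, ∃ v ∈ a.verts ∩ W, u ≠ v ∧ a.label u = a.label v
    · obtain ⟨u, hu, v, hv, huv, hl, D, hD, hprop⟩ := iha oka hPa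
      have hua := (Finset.mem_inter.mp hu).1
      have hvaa := (Finset.mem_inter.mp hv).1
      refine ⟨u, ?_, v, ?_, huv, ?_, D, hD, ?_⟩
      · exact Finset.mem_inter.mpr ⟨Finset.mem_union_left _ hua, (Finset.mem_inter.mp hu).2⟩
      · exact Finset.mem_inter.mpr ⟨Finset.mem_union_left _ hvaa, (Finset.mem_inter.mp hv).2⟩
      · rw [hlu hua, hlu hvaa]; exact hl
      · intro z hz hzu hzv hzD
        rw [hadja hua, hadja hvaa]
        exact hprop z hz hzu hzv hzD
    by_cases hPb : ∃ u ∈ b.verts ∩ W, ∃ v ∈ b.verts ∩ W, u ≠ v ∧ b.label u = b.label v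
    · obtain ⟨u, hu, v, hv, huv, hl, D, hD, hprop⟩ := ihb okb hPb
      have hub := (Finset.mem_inter.mp hu).1
      have hvbb := (Finset.mem_inter.mp hv).1
      refine ⟨u, ?_, v, ?_, huv, ?_, D, hD, ?_⟩
      · exact Finset.mem_inter.mpr ⟨Finset.mem_union_right _ hub, (Finset.mem_inter.mp hu).2⟩
      · exact Finset.mem_inter.mpr ⟨Finset.mem_union_right _ hvbb, (Finset.mem_inter.mp hv).2⟩
      · rw [hlb hub, hlb hvbb]; exact hl
      · intro z hz hzu hzv hzD
        rw [hadjb hub, hadjb hvbb]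
        exact hprop z hz hzu hzv hzD
    -- now neither subexpression has two same-labelled W-vertices
    have hinja : Set.InjOn a.label ↑(a.verts ∩ W) := by
      intro x hx y hy hxy
      by_contra hne
      exact hPa ⟨x, Finset.mem_coe.mp hx, y, Finset.mem_coe.mp hy, hne, hxy⟩
    have hinjb : Set.InjOn b.label ↑(b.verts ∩ W) := by
      intro x hx y hy hxy
      by_contra hne
      exact hPb ⟨x, Finset.mem_coe.mp hx, y, Finset.mem_coe.mp hy, hne, hxy⟩
    have hcarda : (a.verts ∩ W).card ≤ k := by
      have := Finset.card_le_card_of_injOn a.label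
        (fun x _ => Finset.mem_univ (a.label x)) hinja
      simpa using this
    have hcardb : (b.verts ∩ W).card ≤ k := by
      have := Finset.card_le_card_of_injOn b.label
        (fun x _ => Finset.mem_univ (b.label x)) hinjb
      simpa using this
    -- the mixed-case construction
    have mixed : ∀ u v : V, u ∈ a.verts → u ∈ W → v ∈ b.verts → v ∈ W → u ≠ v →
        (union a b).label u = (union a b).label v →
        ∃ u ∈ (union a b).verts ∩ W, ∃ v ∈ (union a b).verts ∩ W,
          u ≠ v ∧ (union a b).label u = (union a b).label v ∧
          ∃ D : Finset V, D.card ≤ 2 * k - 2 ∧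
            ∀ z ∈ W, z ≠ u → z ≠ v → z ∉ D →
              ((union a b).adj u z ↔ (union a b).adj v z) := by
      intro u v hua hUW hvb2 hVW huv hl
      have hkpos : 0 < k := (a.label u).pos
      set D1 := (a.verts ∩ W).filter (fun z => a.adj u z) with hD1
      set D2 := (b.verts ∩ W).filter (fun z => b.adj v z) with hD2
      have hD1sub : D1 ⊆ (a.verts ∩ W).erase u := by
        intro z hz
        rw [Finset.mem_filter] at hz
        exact Finset.mem_erase.mpr ⟨(adj_mem a hz.2).2.2.symm, hz.1⟩
      have hD2sub : D2 ⊆ (b.verts ∩ W).erase v := by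
        intro z hz
        rw [Finset.mem_filter] at hz
        exact Finset.mem_erase.mpr ⟨(adj_mem b hz.2).2.2.symm, hz.1⟩
      have hc1 : D1.card ≤ k - 1 := by
        have h1 := Finset.card_le_card hD1sub
        have h2 : ((a.verts ∩ W).erase u).card = (a.verts ∩ W).card - 1 :=
          Finset.card_erase_of_mem (Finset.mem_inter.mpr ⟨hua, hUW⟩)
        omega
      have hc2 : D2.card ≤ k - 1 := by
        have h1 := Finset.card_le_card hD2sub
        have h2 : ((b.verts ∩ W).erase v).card = (b.verts ∩ W).card - 1 :=
          Finset.card_erase_of_mem (Finset.mem_inter.mpr ⟨hvb2, hVW⟩)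
        omega
      refine ⟨u, Finset.mem_inter.mpr ⟨Finset.mem_union_left _ hua, hUW⟩,
        v, Finset.mem_inter.mpr ⟨Finset.mem_union_right _ hvb2, hVW⟩, huv, hl,
        D1 ∪ D2, ?_, ?_⟩
      · have := Finset.card_union_le D1 D2
        omega
      · intro z hz hzu hzv hzD
        have h1 : ¬ (union a b).adj u z := by
          rintro (h | h)
          · have hzm : z ∈ D1 := Finset.mem_filter.mpr
              ⟨Finset.mem_inter.mpr ⟨(adj_mem a h).2.1, hz⟩, h⟩
            exact hzD (Finset.mem_union_left _ hzm)
          · exact hva hua (adj_mem b h).1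
        have h2 : ¬ (union a b).adj v z := by
          rintro (h | h)
          · exact hvb hvb2 (adj_mem a h).1
          · have hzm : z ∈ D2 := Finset.mem_filter.mpr
              ⟨Finset.mem_inter.mpr ⟨(adj_mem b h).2.1, hz⟩, h⟩
            exact hzD (Finset.mem_union_right _ hzm)
        exact iff_of_false h1 h2
    have huW := (Finset.mem_inter.mp hu).2
    have hvW := (Finset.mem_inter.mp hv).2
    have hu' := (Finset.mem_inter.mp hu).1
    have hv' := (Finset.mem_inter.mp hv).1
    rcases Finset.mem_union.mp hu' with hua | hub <;>
      rcases Finset.mem_union.mp hv' with hva2 | hvb2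
    · exact absurd ⟨u, Finset.mem_inter.mpr ⟨hua, huW⟩, v, Finset.mem_inter.mpr ⟨hva2, hvW⟩,
        huv, by rw [← hlu hua, ← hlu hva2]; exact hlab⟩ hPa
    · exact mixed u v hua huW hvb2 hvW huv hlab
    · obtain ⟨u', hu'', v', hv'', huv', hl', D, hD, hprop⟩ :=
        mixed v u hva2 hvW hub huW huv.symm hlab.symm
      exact ⟨u', hu'', v', hv'', huv', hl', D, hD, hprop⟩
    · exact absurd ⟨u, Finset.mem_inter.mpr ⟨hub, huW⟩, v, Finset.mem_inter.mpr ⟨hvb2, hvW⟩,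
        huv, by rw [← hlb hub, ← hlb hvb2]; exact hlab⟩ hPb
  | relabel i j a ih =>
    rintro oka ⟨u, hu, v, hv, huv, hlab⟩
    by_cases hPa : ∃ u ∈ a.verts ∩ W, ∃ v ∈ a.verts ∩ W, u ≠ v ∧ a.label u = a.label v
    · obtain ⟨u, hu, v, hv, huv, hl, D, hD, hprop⟩ := ih oka hPa
      refine ⟨u, hu, v, hv, huv, ?_, D, hD, hprop⟩
      simp only [label, hl]
    · have hne : a.label u ≠ a.label v := fun h => hPa ⟨u, hu, v, hv, huv, h⟩
      have hlab0 := hlab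
      simp only [label] at hlab
      have hcase : (a.label u = i ∧ a.label v = j) ∨ (a.label v = i ∧ a.label u = j) := by
        by_cases h1 : a.label u = i <;> by_cases h2 : a.label v = i
        · exact absurd (h1.trans h2.symm) hne
        · rw [if_pos h1, if_neg h2] at hlab
          exact Or.inl ⟨h1, hlab.symm⟩
        · rw [if_neg h1, if_pos h2] at hlab
          exact Or.inr ⟨h2, hlab⟩
        · rw [if_neg h1, if_neg h2] at hlab
          exact absurd hlab hne
      have hij : i ≠ j := by
        rcases hcase with ⟨h1, h2⟩ | ⟨h1, h2⟩
        · exact fun h => hne (h1.trans (h.trans h2.symm))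
        · exact fun h => hne (h2.trans (h.symm.trans h1.symm))
      have hk2 : 2 ≤ k := by
        have : Nontrivial (Fin k) := ⟨⟨i, j, hij⟩⟩
        have h := Fintype.one_lt_card (α := Fin k)
        exact (by simpa using h : 1 < k)
      have hinja : Set.InjOn a.label ↑(a.verts ∩ W) := by
        intro x hx y hy hxy
        by_contra hne'
        exact hPa ⟨x, Finset.mem_coe.mp hx, y, Finset.mem_coe.mp hy, hne', hxy⟩
      have hcarda : (a.verts ∩ W).card ≤ k := by
        have := Finset.card_le_card_of_injOn a.label
          (fun x _ => Finset.mem_univ (a.label x)) hinja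
        simpa using this
      have hcu : u ∈ a.verts ∩ W := hu
      have hcv : v ∈ (a.verts ∩ W).erase u := Finset.mem_erase.mpr ⟨huv.symm, hv⟩
      have e1 := Finset.card_erase_of_mem hcu
      have e2 := Finset.card_erase_of_mem hcv
      refine ⟨u, hu, v, hv, huv, hlab0, ((a.verts ∩ W).erase u).erase v, by omega, ?_⟩
      intro z hz hzu hzv hzD
      have h1 : ¬ a.adj u z := fun h => hzD (Finset.mem_erase.mpr ⟨hzv,
        Finset.mem_erase.mpr ⟨hzu, Finset.mem_inter.mpr ⟨(adj_mem a h).2.1, hz⟩⟩⟩)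
      have h2 : ¬ a.adj v z := fun h => hzD (Finset.mem_erase.mpr ⟨hzv,
        Finset.mem_erase.mpr ⟨hzu, Finset.mem_inter.mpr ⟨(adj_mem a h).2.1, hz⟩⟩⟩)
      exact iff_of_false h1 h2
  | join i j a ih =>
    rintro oka hP
    obtain ⟨u, hu, v, hv, huv, hl, D, hD, hprop⟩ := ih oka hP
    have hl' : a.label u = a.label v := hl
    have hua : u ∈ a.verts := (Finset.mem_inter.mp hu).1
    have hva : v ∈ a.verts := (Finset.mem_inter.mp hv).1
    refine ⟨u, hu, v, hv, huv, hl, D, hD, ?_⟩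
    intro z hz hzu hzv hzD
    have base : a.adj u z ↔ a.adj v z := hprop z hz hzu hzv hzD
    show (join i j a).adj u z ↔ (join i j a).adj v z
    constructor
    · rintro (h | ⟨-, h2, -, h4⟩)
      · exact Or.inl (base.mp h)
      · refine Or.inr ⟨hva, h2, fun he => hzv he.symm, ?_⟩
        rcases h4 with ⟨ha, hb⟩ | ⟨ha, hb⟩
        · exact Or.inl ⟨by rw [← hl']; exact ha, hb⟩
        · exact Or.inr ⟨by rw [← hl']; exact ha, hb⟩
    · rintro (h | ⟨-, h2, -, h4⟩)
      · exact Or.inl (base.mpr h)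
      · refine Or.inr ⟨hua, h2, fun he => hzu he.symm, ?_⟩
        rcases h4 with ⟨ha, hb⟩ | ⟨ha, hb⟩
        · exact Or.inl ⟨by rw [hl']; exact ha, hb⟩
        · exact Or.inr ⟨by rw [hl']; exact ha, hb⟩

end CWExpr

/-- `cwd(G) ≤ k`: the graph `G` can be built by a well-formed `k`-expression. -/
def CliqueWidthLE {V : Type*} [DecidableEq V] [Fintype V] (G : SimpleGraph V) (k : ℕ) : Prop :=
  ∃ e : CWExpr V k, e.OK ∧ e.verts = Finset.univ ∧ ∀ u v, G.Adj u v ↔ e.adj u v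

open scoped Classical

/-- The Boolean adjacency indicator of a graph. -/
noncomputable def adjB {V : Type*} (G : SimpleGraph V) (x z : V) : Bool :=
  if G.Adj x z then true else false

/-- A vertex `y` is a function of the set `S` of vertices: there is a Boolean
function `f` of the variables indexed by `S` such that the adjacency of `y`
to any vertex `z` outside `{y} ∪ S` equals `f` applied to the adjacencies
of the members of `S` to `z`. -/
def FunctionOf {V : Type*} (G : SimpleGraph V) (y : V) (S : Finset V) : Prop :=
  y ∉ S ∧ ∃ f : (S → Bool) → Bool, ∀ z, z ≠ y → z ∉ S →
    (G.Adj y z ↔ f (fun s => adjB G s.1 z) = true)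

/-- `fun(y) ≤ k` : the functionality of vertex `y` is at most `k`. -/
def VertexFunLE {V : Type*} (G : SimpleGraph V) (y : V) (k : ℕ) : Prop :=
  ∃ S : Finset V, S.card ≤ k ∧ FunctionOf G y S


/-- `fun(G) ≤ k`: every (nonempty) induced subgraph of `G` has a vertex of
functionality at most `k`. -/
def GraphFunLE {V : Type*} (G : SimpleGraph V) (k : ℕ) : Prop :=
  ∀ W : Set V, W.Nonempty → ∃ y : W, VertexFunLE (G.induce W) y k

lemma adjB_eq_true {V : Type*} (G : SimpleGraph V) (x z : V) :
    adjB G x z = true ↔ G.Adj x z := by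
  unfold adjB
  split <;> simp_all

/-- `fun(G) ≤ 2 cwd(G) - 1`: if `G` has clique-width at most `k`, then the
functionality of `G` is at most `2k - 1`. -/
theorem stmt8 {V : Type*} [DecidableEq V] [Fintype V] (G : SimpleGraph V) (k : ℕ)
    (hcw : CliqueWidthLE G k) : GraphFunLE G (2 * k - 1) := by
  intro W hW
  obtain ⟨e, hOK, hverts, hadjG⟩ := hcw
  rcases Nat.eq_zero_or_pos k with rfl | hk
  · exact (CWExpr.elim0 e).elim
  haveI : Fintype W := W.toFinite.fintype
  by_cases hA : W.toFinset.card ≤ k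
  · -- small case: y is a function of all the other vertices
    obtain ⟨w, hw⟩ := hW
    set y : W := ⟨w, hw⟩
    refine ⟨y, Finset.univ.erase y, ?_, Finset.notMem_erase _ _, fun _ => true, ?_⟩
    · have h1 : (Finset.univ.erase y).card = Fintype.card W - 1 := by
        rw [Finset.card_erase_of_mem (Finset.mem_univ y), Finset.card_univ]
      have h2 : Fintype.card W = W.toFinset.card := (Set.toFinset_card W).symm
      omega
    · intro z hz hzS
      exact absurd (Finset.mem_erase.mpr ⟨hz, Finset.mem_univ z⟩) hzS
  · push_neg at hA
    have hP : ∃ u ∈ e.verts ∩ W.toFinset, ∃ v ∈ e.verts ∩ W.toFinset,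
        u ≠ v ∧ e.label u = e.label v := by
      obtain ⟨u, hu, v, hv, huv, hl⟩ :=
        Finset.exists_ne_map_eq_of_card_lt_of_maps_to
          (t := (Finset.univ : Finset (Fin k)))
          (by rw [Finset.card_univ, Fintype.card_fin]; exact hA)
          (fun x _ => Finset.mem_univ (e.label x))
      exact ⟨u, Finset.mem_inter.mpr ⟨by rw [hverts]; exact Finset.mem_univ u, hu⟩,
        v, Finset.mem_inter.mpr ⟨by rw [hverts]; exact Finset.mem_univ v, hv⟩, huv, hl⟩
    obtain ⟨u, hu, v, hv, huv, hlab, D, hD, hprop⟩ := CWExpr.key W.toFinset e hOK hP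
    have huW : u ∈ W := Set.mem_toFinset.mp (Finset.mem_inter.mp hu).2
    have hvW : v ∈ W := Set.mem_toFinset.mp (Finset.mem_inter.mp hv).2
    set D' : Finset V := (D.erase u).erase v with hD'
    set y : W := ⟨u, huW⟩ with hy
    set v' : W := ⟨v, hvW⟩ with hv'
    set S : Finset W := Finset.univ.filter (fun z : W => z.1 = v ∨ z.1 ∈ D') with hS
    have hvS : v' ∈ S := Finset.mem_filter.mpr ⟨Finset.mem_univ _, Or.inl rfl⟩
    have hyS : y ∉ S := by
      rw [hS, Finset.mem_filter]
      rintro ⟨-, rfl | h⟩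
      · exact huv rfl
      · rw [hD', Finset.mem_erase, Finset.mem_erase] at h
        exact h.2.1 rfl
    refine ⟨y, S, ?_, hyS, fun g => g ⟨v', hvS⟩, ?_⟩
    · have h1 : S.card ≤ (insert v D').card := by
        apply Finset.card_le_card_of_injOn Subtype.val
        · intro z hz
          simp only [Finset.mem_coe, hS, Finset.mem_filter] at hz
          rcases hz.2 with h | h
          · exact Finset.mem_insert.mpr (Or.inl h)
          · exact Finset.mem_insert.mpr (Or.inr h)
        · exact fun x _ y _ h => Subtype.val_injective h
      have h2 := Finset.card_insert_le v D'
      have h3 : D'.card ≤ D.card := le_trans (Finset.card_erase_le) (Finset.card_erase_le)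
      omega
    · intro z hzy hzS
      rw [hS, Finset.mem_filter] at hzS
      push_neg at hzS
      have hz' := hzS (Finset.mem_univ z)
      have hzv : z.1 ≠ v := hz'.1
      have hzD' : z.1 ∉ D' := hz'.2
      have hzu : z.1 ≠ u := fun h => hzy (Subtype.ext h)
      have hzD : z.1 ∉ D := fun h => hzD' (Finset.mem_erase.mpr ⟨hzv,
        Finset.mem_erase.mpr ⟨hzu, h⟩⟩)
      have hzW : z.1 ∈ W.toFinset := Set.mem_toFinset.mpr z.2
      have hiff : G.Adj u z.1 ↔ G.Adj v z.1 := by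
        rw [hadjG, hadjG]
        exact hprop z.1 hzW hzu hzv hzD
      show (G.induce W).Adj y z ↔ adjB (G.induce W) v' z = true
      constructor
      · intro h
        rw [adjB_eq_true]
        have hG : G.Adj u z.1 := by
          simpa using h
        have : G.Adj v z.1 := hiff.mp hG
        simpa using this
      · intro h
        rw [adjB_eq_true] at h
        have hG : G.Adj v z.1 := by
          simpa using h
        have : G.Adj u z.1 := hiff.mpr hG
        simpa using this
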